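/- Let δ ∈ (0, 1/2) and suppose (x_i)_{i∈I} in ℝⁿ and (x'_i)_{i∈I} in ℝ^{n'} satisfy the (δ, n, n')-pairwise JL condition. Let β > 0 and let 𝔠_o be a partition of I into exactly k nonempty blocks that is k-optimal both for (x_i) and for (x'_i) (as is guaranteed when the squared distances of (x_i) have the √s-multiplicative-perturbation-robustness property with s ≤ 1−δ). Suppose (x_i) has (1+β)-weak deletion stability with respect to 𝔠_o: for every partition 𝔠 obtained from 𝔠_o by replacing two distinct blocks C_r and C_t by their union C_r ∪ C_t (and keeping all other blocks), J((x_i), 𝔠) ≥ (1+β)·J((x_i), 𝔠_o). Then for every such merged partition 𝔠: J((x'_i), 𝔠) ≥ (1+β)·((1−δ)/(1+δ))·J((x'_i), 𝔠_o); that is, the projected data has (1+β)·(1−δ)/(1+δ)-weak deletion stability. -/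

import Mathlib

open Finset

variable {I : Type*} [Fintype I] [DecidableEq I]

/-- Centroid of the points indexed by the finite set `C`. -/
noncomputable def centroid {E : Type*} [NormedAddCommGroup E] [NormedSpace ℝ E]
    (y : I → E) (C : Finset I) : E :=
  (C.card : ℝ)⁻¹ • ∑ i ∈ C, y i

/-- `k`-means cost `J((y_i), 𝔠) = Σ_i ‖y_i − μ_y(𝔠(i))‖²` of a partition, written
as a sum over the blocks. -/
noncomputable def kmeansCost {E : Type*} [NormedAddCommGroup E] [NormedSpace ℝ E]
    (y : I → E) (c : Finpartition (univ : Finset I)) : ℝ :=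
  ∑ C ∈ c.parts, ∑ i ∈ C, ‖y i - centroid y C‖ ^ 2

/-- Within-cluster variance `VAR((y_i), C)`. -/
noncomputable def clVar {E : Type*} [NormedAddCommGroup E] [NormedSpace ℝ E]
    (y : I → E) (C : Finset I) : ℝ :=
  (C.card : ℝ)⁻¹ * ∑ i ∈ C, ‖y i - centroid y C‖ ^ 2

/-- The `(δ, n, n')`-pairwise Johnson–Lindenstrauss condition. -/
def JLpair (n n' : ℕ) (δ : ℝ) {I : Type*} (x : I → EuclideanSpace ℝ (Fin n))
    (x' : I → EuclideanSpace ℝ (Fin n')) : Prop :=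
  ∀ i j : I, (1 - δ) * ‖x i - x j‖ ^ 2 ≤ (n : ℝ) / n' * ‖x' i - x' j‖ ^ 2 ∧
    (n : ℝ) / n' * ‖x' i - x' j‖ ^ 2 ≤ (1 + δ) * ‖x i - x j‖ ^ 2

/-- A partition of `I` into at most `k` (automatically nonempty) blocks is `k`-optimal
for the points `y` if it minimizes the k-means cost among all such partitions. -/
def kOptimal {E : Type*} [NormedAddCommGroup E] [NormedSpace ℝ E] (k : ℕ) (y : I → E)
    (c : Finpartition (univ : Finset I)) : Prop :=
  c.parts.card ≤ k ∧ ∀ d : Finpartition (univ : Finset I), d.parts.card ≤ k →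
    kmeansCost y c ≤ kmeansCost y d

/-- A partition is k-means-stable (a local minimum of the k-means algorithm) for points `y`
if every point is at least as close to its own block's centroid as to any other centroid. -/
def kmeansStable {E : Type*} [NormedAddCommGroup E] [NormedSpace ℝ E] (y : I → E)
    (c : Finpartition (univ : Finset I)) : Prop :=
  ∀ i : I, ∀ Ci ∈ c.parts, i ∈ Ci → ∀ C ∈ c.parts,
    ‖y i - centroid y Ci‖ ≤ ‖y i - centroid y C‖

/-- `p` bounds the cluster spread of `y` with respect to the partition `c`. -/
def spreadBound {E : Type*} [NormedAddCommGroup E] [NormedSpace ℝ E] (p : ℝ) (y : I → E)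
    (c : Finpartition (univ : Finset I)) : Prop :=
  ∀ C₁ ∈ c.parts, ∀ C₂ ∈ c.parts, C₁ ≠ C₂ →
    clVar y C₁ * ((C₁.card + C₂.card : ℝ) / C₂.card)
      + clVar y C₂ * ((C₁.card + C₂.card : ℝ) / C₁.card)
      ≤ p * ‖centroid y C₁ - centroid y C₂‖ ^ 2

lemma sum_sub_centroid_eq_zero {E : Type*} [NormedAddCommGroup E] [InnerProductSpace ℝ E]
    (y : I → E) (C : Finset I) (hC : C.Nonempty) :
    ∑ i ∈ C, (y i - centroid y C) = 0 := by
  have hcard : (C.card : ℝ) ≠ 0 := by positivity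
  rw [Finset.sum_sub_distrib, Finset.sum_const, ← Nat.cast_smul_eq_nsmul ℝ]
  simp only [_root_.centroid]
  rw [smul_smul, mul_inv_cancel₀ hcard, one_smul, sub_self]

lemma sum_pairwise_dist_sq {E : Type*} [NormedAddCommGroup E] [InnerProductSpace ℝ E]
    (y : I → E) (C : Finset I) :
    ∑ i ∈ C, ∑ j ∈ C, ‖y i - y j‖ ^ 2
      = 2 * C.card * ∑ i ∈ C, ‖y i - centroid y C‖ ^ 2 := by
  rcases C.eq_empty_or_nonempty with rfl | hC
  · simp
  set μ := centroid y C with hμ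
  have hzero : ∑ i ∈ C, (y i - μ) = 0 := sum_sub_centroid_eq_zero y C hC
  have hexp : ∀ i j : I, ‖y i - y j‖ ^ 2
      = ‖y i - μ‖ ^ 2 - 2 * inner ℝ (y i - μ) (y j - μ) + ‖y j - μ‖ ^ 2 := by
    intro i j
    have : y i - y j = (y i - μ) - (y j - μ) := by abel
    rw [this, @norm_sub_sq_real]
  calc ∑ i ∈ C, ∑ j ∈ C, ‖y i - y j‖ ^ 2
      = ∑ i ∈ C, ∑ j ∈ C, (‖y i - μ‖ ^ 2 - 2 * inner ℝ (y i - μ) (y j - μ) + ‖y j - μ‖ ^ 2) := by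
        simp_rw [hexp]
    _ = 2 * C.card * ∑ i ∈ C, ‖y i - μ‖ ^ 2 := by
        have step : ∀ i ∈ C, ∑ j ∈ C,
            (‖y i - μ‖ ^ 2 - 2 * inner ℝ (y i - μ) (y j - μ) + ‖y j - μ‖ ^ 2)
            = (C.card : ℝ) * ‖y i - μ‖ ^ 2 + ∑ j ∈ C, ‖y j - μ‖ ^ 2 := by
          intro i _
          rw [Finset.sum_add_distrib, Finset.sum_sub_distrib, ← Finset.mul_sum, ← inner_sum,
            hzero, inner_zero_right, mul_zero, sub_zero, Finset.sum_const, nsmul_eq_mul]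
        rw [Finset.sum_congr rfl step, Finset.sum_add_distrib, ← Finset.mul_sum,
          Finset.sum_const, nsmul_eq_mul]
        ring

lemma block_compare {n n' : ℕ} {δ : ℝ}
    (x : I → EuclideanSpace ℝ (Fin n)) (x' : I → EuclideanSpace ℝ (Fin n'))
    (hJL : JLpair n n' δ x x') (C : Finset I) :
    (1 - δ) * ∑ i ∈ C, ‖x i - centroid x C‖ ^ 2
        ≤ (n : ℝ) / n' * ∑ i ∈ C, ‖x' i - centroid x' C‖ ^ 2 ∧
      (n : ℝ) / n' * ∑ i ∈ C, ‖x' i - centroid x' C‖ ^ 2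
        ≤ (1 + δ) * ∑ i ∈ C, ‖x i - centroid x C‖ ^ 2 := by
  rcases C.eq_empty_or_nonempty with rfl | hC
  · simp
  have hcard : (0 : ℝ) < 2 * C.card := by
    have := hC.card_pos; positivity
  have h1 : (1 - δ) * ∑ i ∈ C, ∑ j ∈ C, ‖x i - x j‖ ^ 2
      ≤ (n : ℝ) / n' * ∑ i ∈ C, ∑ j ∈ C, ‖x' i - x' j‖ ^ 2 := by
    rw [Finset.mul_sum, Finset.mul_sum]
    refine Finset.sum_le_sum fun i _ => ?_
    rw [Finset.mul_sum, Finset.mul_sum]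
    exact Finset.sum_le_sum fun j _ => (hJL i j).1
  have h2 : (n : ℝ) / n' * ∑ i ∈ C, ∑ j ∈ C, ‖x' i - x' j‖ ^ 2
      ≤ (1 + δ) * ∑ i ∈ C, ∑ j ∈ C, ‖x i - x j‖ ^ 2 := by
    rw [Finset.mul_sum, Finset.mul_sum]
    refine Finset.sum_le_sum fun i _ => ?_
    rw [Finset.mul_sum, Finset.mul_sum]
    exact Finset.sum_le_sum fun j _ => (hJL i j).2
  rw [sum_pairwise_dist_sq x C, sum_pairwise_dist_sq x' C] at h1 h2
  constructor
  · nlinarith [h1]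
  · nlinarith [h2]

lemma cost_compare {n n' : ℕ} {δ : ℝ}
    (x : I → EuclideanSpace ℝ (Fin n)) (x' : I → EuclideanSpace ℝ (Fin n'))
    (hJL : JLpair n n' δ x x') (c : Finpartition (univ : Finset I)) :
    (1 - δ) * kmeansCost x c ≤ (n : ℝ) / n' * kmeansCost x' c ∧
      (n : ℝ) / n' * kmeansCost x' c ≤ (1 + δ) * kmeansCost x c := by
  unfold kmeansCost
  rw [Finset.mul_sum, Finset.mul_sum, Finset.mul_sum]
  exact ⟨Finset.sum_le_sum fun C _ => (block_compare x x' hJL C).1,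
    Finset.sum_le_sum fun C _ => (block_compare x x' hJL C).2⟩

/-- (1+β)-weak deletion stability is transmitted to the projected space, with the factor
weakened to `(1+β)·(1−δ)/(1+δ)`, for a partition which is optimal in both spaces. -/
theorem weak_deletion_stability_preserved {n n' : ℕ} (hn'0 : 0 < n') (hn'n : n' < n)
    {δ : ℝ} (hδ0 : 0 < δ) (hδ : δ < 1 / 2)
    {I : Type*} [Fintype I] [DecidableEq I]
    (x : I → EuclideanSpace ℝ (Fin n)) (x' : I → EuclideanSpace ℝ (Fin n'))
    (hJL : JLpair n n' δ x x') (k : ℕ) (β : ℝ) (hβ : 0 < β)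
    (co : Finpartition (univ : Finset I)) (hcard : co.parts.card = k)
    (hopt : kOptimal k x co) (hopt' : kOptimal k x' co)
    (hstab : ∀ (c : Finpartition (univ : Finset I)) (Cr Ct : Finset I),
      Cr ∈ co.parts → Ct ∈ co.parts → Cr ≠ Ct →
      c.parts = insert (Cr ∪ Ct) ((co.parts.erase Cr).erase Ct) →
      (1 + β) * kmeansCost x co ≤ kmeansCost x c) :
    ∀ (c : Finpartition (univ : Finset I)) (Cr Ct : Finset I),
      Cr ∈ co.parts → Ct ∈ co.parts → Cr ≠ Ct →
      c.parts = insert (Cr ∪ Ct) ((co.parts.erase Cr).erase Ct) →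
      (1 + β) * ((1 - δ) / (1 + δ)) * kmeansCost x' co ≤ kmeansCost x' c := by
  intro c Cr Ct hCr hCt hne hparts
  have hA : (1 + β) * kmeansCost x co ≤ kmeansCost x c := hstab c Cr Ct hCr hCt hne hparts
  have h1 := (cost_compare x x' hJL c).1
  have h2 := (cost_compare x x' hJL co).2
  have hn0 : (0 : ℝ) < n := by exact_mod_cast hn'0.trans hn'n
  have hn'pos : (0 : ℝ) < n' := by exact_mod_cast hn'0
  have hδ1 : (0 : ℝ) < 1 + δ := by linarith
  have hδ2 : (0 : ℝ) < 1 - δ := by linarith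
  rw [mul_comm ((1:ℝ) + β) ((1 - δ) / (1 + δ)), mul_assoc, div_mul_eq_mul_div,
    div_le_iff₀ hδ1]
  have hrpos : (0 : ℝ) < (n : ℝ) / n' := by positivity
  have key : (1 - δ) * ((1 + β) * kmeansCost x' co) * ((n:ℝ)/n')
      ≤ kmeansCost x' c * (1 + δ) * ((n:ℝ)/n') := by
    nlinarith [mul_le_mul_of_nonneg_left h2 (le_of_lt hδ2),
      mul_le_mul_of_nonneg_left hA (le_of_lt (mul_pos hδ2 hδ1)),
      mul_le_mul_of_nonneg_left h1 (le_of_lt hδ1)]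
  exact le_of_mul_le_mul_right (by linarith [key]) hrpos
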